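/- Let S be a Cu-semigroup satisfying (O5) that has m-comparison and is n-almost divisible for some m, n ∈ ℕ. Suppose that the only functionals on S are the zero functional and the functional sending 0 to 0 and every nonzero element to ∞. Then x ≤ y for all x, y ∈ S with y ≠ 0. -/

import Mathlib

open scoped ENNReal

section CuPreamble

variable {S : Type*} [AddCommMonoid S] [PartialOrder S]

/-- The way-below (compact containment) relation: `x ≪ y` if for every increasing
sequence with a supremum above `y`, some term dominates `x`. -/
def WayBelow (x y : S) : Prop :=
  ∀ (f : ℕ → S) (s : S), Monotone f → IsLUB (Set.range f) s → y ≤ s → ∃ n, x ≤ f n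

/-- A Cu-semigroup: a positively ordered commutative monoid satisfying (O1)-(O4). -/
structure IsCuSemigroup (S : Type*) [AddCommMonoid S] [PartialOrder S] : Prop where
  zero_le : ∀ x : S, 0 ≤ x
  add_le_add : ∀ ⦃a b c d : S⦄, a ≤ b → c ≤ d → a + c ≤ b + d
  O1 : ∀ f : ℕ → S, Monotone f → ∃ s : S, IsLUB (Set.range f) s
  O2 : ∀ x : S, ∃ f : ℕ → S, (∀ n, WayBelow (f n) (f (n + 1))) ∧ IsLUB (Set.range f) x
  O3 : ∀ ⦃x₁ x₂ y₁ y₂ : S⦄, WayBelow x₁ x₂ → WayBelow y₁ y₂ → WayBelow (x₁ + y₁) (x₂ + y₂)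
  O4 : ∀ (f g : ℕ → S) (s t : S), Monotone f → Monotone g → IsLUB (Set.range f) s →
    IsLUB (Set.range g) t → IsLUB (Set.range fun n => f n + g n) (s + t)

/-- The axiom (O5), including the strengthened form. -/
def SatisfiesO5 (S : Type*) [AddCommMonoid S] [PartialOrder S] : Prop :=
  (∀ x' x y : S, WayBelow x' x → x ≤ y → ∃ z : S, x' + z ≤ y ∧ y ≤ x + z) ∧
  (∀ x' x y w' w : S, WayBelow x' x → x + w ≤ y → WayBelow w' w →
    ∃ z : S, WayBelow w' z ∧ x' + z ≤ y ∧ y ≤ x + z)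

/-- The axiom (O6). -/
def SatisfiesO6 (S : Type*) [AddCommMonoid S] [PartialOrder S] : Prop :=
  ∀ x' x y z : S, WayBelow x' x → x ≤ y + z →
    ∃ y' z' : S, x' ≤ y' + z' ∧ y' ≤ y ∧ y' ≤ x ∧ z' ≤ z ∧ z' ≤ x

/-- A functional on a Cu-semigroup: a map to `[0,∞]` preserving order, addition, zero,
and suprema of increasing sequences. -/
structure IsFunctional (l : S → ℝ≥0∞) : Prop where
  mono : Monotone l
  map_zero : l 0 = 0
  map_add : ∀ x y : S, l (x + y) = l x + l y
  map_sup : ∀ (f : ℕ → S) (s : S), Monotone f → IsLUB (Set.range f) s → l s = ⨆ n, l (f n)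

/-- Edwards' condition. -/
def EdwardsCondition (S : Type*) [AddCommMonoid S] [PartialOrder S] : Prop :=
  ∀ l : S → ℝ≥0∞, IsFunctional l → ∀ x y : S,
    sInf {r : ℝ≥0∞ | ∃ l₁ l₂ : S → ℝ≥0∞, IsFunctional l₁ ∧ IsFunctional l₂ ∧
        (∀ s : S, l₁ s + l₂ s = l s) ∧ r = l₁ x + l₂ y} =
    sSup {r : ℝ≥0∞ | ∃ z : S, z ≤ x ∧ z ≤ y ∧ r = l z}

/-- A scale on a Cu-semigroup. -/
structure IsScale (Sg : Set S) : Prop where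
  hered : ∀ ⦃x y : S⦄, y ≤ x → x ∈ Sg → y ∈ Sg
  supClosed : ∀ (f : ℕ → S) (s : S), Monotone f → (∀ n, f n ∈ Sg) →
    IsLUB (Set.range f) s → s ∈ Sg
  generates : ∀ x' x : S, WayBelow x' x → ∃ L : List S, (∀ z ∈ L, z ∈ Sg) ∧ x' ≤ L.sum

/-- The `d`-fold amplification `Σ^{(d)}` of a scale. -/
def scaleAmp (Sg : Set S) : ℕ → Set S
  | 0 => {0}
  | d + 1 => {x : S | ∀ x' : S, WayBelow x' x →
      ∃ f : Fin (d + 1) → S, (∀ i, f i ∈ Sg) ∧ WayBelow x' (∑ i, f i)}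

end CuPreamble

section Aux
set_option linter.unusedSectionVars false
set_option linter.unusedVariables false

variable {S : Type*} [AddCommMonoid S] [PartialOrder S]

theorem wb_le {x y : S} (h : WayBelow x y) : x ≤ y := by
  obtain ⟨n, hn⟩ := h (fun _ => y) y monotone_const
    ⟨by rintro _ ⟨k, rfl⟩; exact le_rfl, fun b hb => hb ⟨0, rfl⟩⟩ le_rfl
  exact hn

theorem le_wb {x y z : S} (h1 : x ≤ y) (h2 : WayBelow y z) : WayBelow x z :=
  fun f s mf hl hle => (h2 f s mf hl hle).imp fun _ hn => h1.trans hn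

theorem wb_le_right {x y z : S} (h2 : WayBelow x y) (h1 : y ≤ z) : WayBelow x z :=
  fun f s mf hl hzs => h2 f s mf hl (h1.trans hzs)

theorem zero_wb (hCu : IsCuSemigroup S) (y : S) : WayBelow (0:S) y :=
  fun f _ _ _ _ => ⟨0, hCu.zero_le _⟩

/-- O2 packaged: an increasing sequence way-below x with lub x. -/
theorem o2' (hCu : IsCuSemigroup S) (x : S) :
    ∃ f : ℕ → S, Monotone f ∧ (∀ n, WayBelow (f n) x) ∧ IsLUB (Set.range f) x := by
  obtain ⟨f, hf, hlub⟩ := hCu.O2 x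
  refine ⟨f, monotone_nat_of_le_succ (fun n => wb_le (hf n)), fun n => ?_, hlub⟩
  exact wb_le_right (hf n) (hlub.1 ⟨n + 1, rfl⟩)

theorem exists_wb_ne_zero (hCu : IsCuSemigroup S) {y : S} (hy : y ≠ 0) :
    ∃ y', WayBelow y' y ∧ y' ≠ 0 := by
  by_contra h
  push_neg at h
  obtain ⟨f, hm, hwb, hlub⟩ := o2' hCu y
  have : y ≤ 0 := hlub.2 (by rintro _ ⟨n, rfl⟩; exact (h _ (hwb n)).le)
  exact hy (le_antisymm this (hCu.zero_le y))

theorem wb_interp (hCu : IsCuSemigroup S) {a x : S} (h : WayBelow a x) :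
    ∃ c, WayBelow a c ∧ WayBelow c x := by
  obtain ⟨f, hf, hlub⟩ := hCu.O2 x
  have hm : Monotone f := monotone_nat_of_le_succ (fun n => wb_le (hf n))
  obtain ⟨n, hn⟩ := h f x hm hlub le_rfl
  exact ⟨f (n+1), le_wb hn (hf n), wb_le_right (hf (n+1)) (hlub.1 ⟨n + 2, rfl⟩)⟩

theorem wb_add_decomp (hCu : IsCuSemigroup S) {u x y : S} (h : WayBelow u (x + y)) :
    ∃ a b, WayBelow a x ∧ WayBelow b y ∧ u ≤ a + b := by
  obtain ⟨f, hfm, hfwb, hflub⟩ := o2' hCu x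
  obtain ⟨g, hgm, hgwb, hglub⟩ := o2' hCu y
  have hsum : IsLUB (Set.range fun n => f n + g n) (x + y) :=
    hCu.O4 f g x y hfm hgm hflub hglub
  have hsm : Monotone fun n => f n + g n := fun i j hij => hCu.add_le_add (hfm hij) (hgm hij)
  obtain ⟨n, hn⟩ := h _ _ hsm hsum le_rfl
  exact ⟨f n, g n, hfwb n, hgwb n, hn⟩

theorem cuLeAddSelf (hCu : IsCuSemigroup S) (x y : S) : x ≤ x + y := by
  calc x = x + 0 := (add_zero x).symm
    _ ≤ x + y := hCu.add_le_add le_rfl (hCu.zero_le y)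

theorem nsmul_le_nsmul_coeff (hCu : IsCuSemigroup S) {j k : ℕ} (h : j ≤ k) (a : S) :
    j • a ≤ k • a := by
  obtain ⟨d, rfl⟩ := Nat.exists_eq_add_of_le h
  rw [add_nsmul]
  exact cuLeAddSelf hCu _ _

theorem nsmul_le_nsmul_elt (hCu : IsCuSemigroup S) {a b : S} (h : a ≤ b) (k : ℕ) :
    k • a ≤ k • b := by
  induction k with
  | zero => simp
  | succ k ih => rw [succ_nsmul, succ_nsmul]; exact hCu.add_le_add ih h

end Aux
section Aux2
open scoped Classical
set_option linter.unusedSectionVars false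
set_option linter.unusedVariables false

variable {S : Type*} [AddCommMonoid S] [PartialOrder S]

/-- Any "ideal" containing a nonzero element is everything, given the functional dichotomy. -/
theorem ideal_eq_univ (hCu : IsCuSemigroup S)
    (hfun : ∀ l : S → ℝ≥0∞, IsFunctional l →
      (∀ x : S, l x = 0) ∨ (∀ x : S, l x = if x = 0 then 0 else ⊤))
    (F : Set S)
    (hdown : ∀ a b : S, a ≤ b → b ∈ F → a ∈ F)
    (hadd : ∀ a b : S, a ∈ F → b ∈ F → a + b ∈ F)
    (hsup : ∀ (g : ℕ → S) (s : S), Monotone g → (∀ n, g n ∈ F) →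
      IsLUB (Set.range g) s → s ∈ F)
    (h0 : (0:S) ∈ F) (w : S) (hw : w ∈ F) (hw0 : w ≠ 0) : ∀ s : S, s ∈ F := by
  classical
  set l : S → ℝ≥0∞ := fun s => if s ∈ F then 0 else ⊤ with hl_def
  have hmemadd : ∀ x y : S, (x + y ∈ F) ↔ (x ∈ F ∧ y ∈ F) := by
    intro x y
    constructor
    · intro h
      exact ⟨hdown _ _ (cuLeAddSelf hCu x y) h,
        hdown _ _ (by rw [add_comm]; exact cuLeAddSelf hCu y x) h⟩
    · intro ⟨h1, h2⟩; exact hadd _ _ h1 h2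
  have hl : IsFunctional l := by
    constructor
    · intro a b hab
      by_cases hb : b ∈ F
      · have : a ∈ F := hdown _ _ hab hb
        simp [hl_def, this, hb]
      · simp [hl_def, hb]
    · simp [hl_def, h0]
    · intro x y
      by_cases hx : x ∈ F <;> by_cases hy : y ∈ F
      · have : x + y ∈ F := hadd _ _ hx hy
        simp [hl_def, hx, hy, this]
      · have : x + y ∉ F := fun h => hy ((hmemadd x y).1 h).2
        simp [hl_def, hx, hy, this]
      · have : x + y ∉ F := fun h => hx ((hmemadd x y).1 h).1
        simp [hl_def, hx, hy, this]
      · have : x + y ∉ F := fun h => hx ((hmemadd x y).1 h).1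
        simp [hl_def, hx, hy, this]
    · intro g s hg hlub
      by_cases hs : s ∈ F
      · have : ∀ n, g n ∈ F := fun n => hdown _ _ (hlub.1 ⟨n, rfl⟩) hs
        simp [hl_def, hs, this]
      · have : ∃ n, g n ∉ F := by
          by_contra hh
          push_neg at hh
          exact hs (hsup g s hg hh hlub)
        obtain ⟨n, hn⟩ := this
        have h1 : l s = ⊤ := by simp [hl_def, hs]
        have h2 : l (g n) = ⊤ := by simp [hl_def, hn]
        rw [h1]
        refine le_antisymm ?_ le_top
        rw [← h2]
        exact le_iSup (fun n => l (g n)) n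
  rcases hfun l hl with h | h
  · intro s
    by_contra hs
    have := h s
    simp [hl_def, hs] at this
  · have := h w
    simp [hl_def, hw, hw0] at this

/-- The set of elements bounded by a multiple of `z`. -/
def Bset (z : S) : Set S := {s | ∃ N : ℕ, s ≤ N • z}

theorem Bset_zero_mem (z : S) : (0:S) ∈ Bset z := ⟨0, by simp⟩

theorem Bset_add (hCu : IsCuSemigroup S) {z a b : S} (ha : a ∈ Bset z) (hb : b ∈ Bset z) :
    a + b ∈ Bset z := by
  obtain ⟨N1, h1⟩ := ha; obtain ⟨N2, h2⟩ := hb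
  exact ⟨N1 + N2, by rw [add_nsmul]; exact hCu.add_le_add h1 h2⟩

theorem Bset_down {z a b : S} (hab : a ≤ b) (hb : b ∈ Bset z) : a ∈ Bset z := by
  obtain ⟨N, hN⟩ := hb; exact ⟨N, hab.trans hN⟩

theorem Bset_z (z : S) : z ∈ Bset z := ⟨1, by simp⟩

theorem Bset_nsmul (hCu : IsCuSemigroup S) {z a : S} (ha : a ∈ Bset z) (k : ℕ) :
    k • a ∈ Bset z := by
  induction k with
  | zero => simpa using Bset_zero_mem z
  | succ k ih => rw [succ_nsmul]; exact Bset_add hCu ih ha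

/-- Every element way-below something is bounded by multiples of any nonzero z. -/
theorem wb_mem_Bset (hCu : IsCuSemigroup S)
    (hfun : ∀ l : S → ℝ≥0∞, IsFunctional l →
      (∀ x : S, l x = 0) ∨ (∀ x : S, l x = if x = 0 then 0 else ⊤))
    {z : S} (hz : z ≠ 0) {a x : S} (h : WayBelow a x) : a ∈ Bset z := by
  set F : Set S := {s | ∀ s', WayBelow s' s → s' ∈ Bset z} with hF
  have hFuniv : ∀ s : S, s ∈ F := by
    refine ideal_eq_univ hCu hfun F ?_ ?_ ?_ ?_ z ?_ hz
    · intro a b hab hb s' hs'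
      exact hb s' (wb_le_right hs' hab)
    · intro a b ha hb u hu
      obtain ⟨a', b', ha', hb', hle⟩ := wb_add_decomp hCu hu
      exact Bset_down hle (Bset_add hCu (ha a' ha') (hb b' hb'))
    · intro g s hg hgF hlub s' hs'
      obtain ⟨c, hc1, hc2⟩ := wb_interp hCu hs'
      obtain ⟨n, hn⟩ := hc2 g s hg hlub le_rfl
      exact hgF n s' (wb_le_right hc1 hn)
    · intro s' hs'
      exact Bset_down (wb_le hs') (Bset_zero_mem z)
    · intro s' hs'
      exact Bset_down (wb_le hs') (Bset_z z)
  exact hFuniv x a h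

end Aux2
section Aux3
open scoped Classical
set_option linter.unusedSectionVars false
set_option linter.unusedVariables false

variable {S : Type*} [AddCommMonoid S] [PartialOrder S]

/-- Stabilized preorder: `a ≼ b` iff `a + c ≤ b + c` for some bounded `c`. -/
def Pre (z a b : S) : Prop := ∃ c ∈ Bset z, a + c ≤ b + c

/-- Preorder forcing `f z ≤ f x'`. -/
def Pre' (z x' a b : S) : Prop := ∃ k : ℕ, Pre z (a + k • x') (b + k • z)

theorem Pre.of_le {z a b : S} (h : a ≤ b) : Pre z a b :=
  ⟨0, Bset_zero_mem z, by simpa using h⟩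

theorem Pre.refl (z a : S) : Pre z a a := Pre.of_le le_rfl

theorem Pre.trans (hCu : IsCuSemigroup S) {z a b c : S}
    (h1 : Pre z a b) (h2 : Pre z b c) : Pre z a c := by
  obtain ⟨c1, hc1, h1⟩ := h1; obtain ⟨c2, hc2, h2⟩ := h2
  refine ⟨c1 + c2, Bset_add hCu hc1 hc2, ?_⟩
  calc a + (c1 + c2) = (a + c1) + c2 := by rw [add_assoc]
    _ ≤ (b + c1) + c2 := hCu.add_le_add h1 le_rfl
    _ = (b + c2) + c1 := by rw [add_assoc, add_comm c1 c2, add_assoc]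
    _ ≤ (c + c2) + c1 := hCu.add_le_add h2 le_rfl
    _ = c + (c1 + c2) := by rw [add_assoc, add_comm c2 c1]

theorem Pre.add_right (hCu : IsCuSemigroup S) {z a b : S} (e : S) (h : Pre z a b) :
    Pre z (a + e) (b + e) := by
  obtain ⟨c, hc, h⟩ := h
  refine ⟨c, hc, ?_⟩
  calc a + e + c = (a + c) + e := by rw [add_assoc, add_comm e c, add_assoc]
    _ ≤ (b + c) + e := hCu.add_le_add h le_rfl
    _ = b + e + c := by rw [add_assoc, add_comm c e, add_assoc]

theorem Pre.cancel (hCu : IsCuSemigroup S) {z a b w : S} (hw : w ∈ Bset z)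
    (h : Pre z (a + w) (b + w)) : Pre z a b := by
  obtain ⟨c, hc, h⟩ := h
  exact ⟨w + c, Bset_add hCu hw hc, by rwa [← add_assoc, ← add_assoc]⟩

/-- Absorption: a single bounded error element absorbs iteration. -/
theorem Pre.iterate (hCu : IsCuSemigroup S) {a b c : S}
    (h : a + c ≤ b + c) : ∀ j : ℕ, j • a + c ≤ j • b + c := by
  intro j
  induction j with
  | zero => simp
  | succ j ih =>
    calc (j+1) • a + c = j • a + (a + c) := by rw [succ_nsmul, add_assoc]
      _ ≤ j • a + (b + c) := hCu.add_le_add le_rfl h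
      _ = b + (j • a + c) := by rw [← add_assoc, add_comm (j • a) b, add_assoc]
      _ ≤ b + (j • b + c) := hCu.add_le_add le_rfl ih
      _ = (j+1) • b + c := by rw [succ_nsmul, add_comm (j • b) b, add_assoc]

theorem Pre.nsmul (hCu : IsCuSemigroup S) {z a b : S} (h : Pre z a b) (j : ℕ) :
    Pre z (j • a) (j • b) := by
  obtain ⟨c, hc, h⟩ := h
  exact ⟨c, hc, Pre.iterate hCu h j⟩

theorem Pre'.of_pre {z x' a b : S} (h : Pre z a b) : Pre' z x' a b :=
  ⟨0, by simpa using h⟩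

theorem Pre'.of_le {z x' a b : S} (h : a ≤ b) : Pre' z x' a b := Pre'.of_pre (Pre.of_le h)

theorem Pre'.refl (z x' a : S) : Pre' z x' a a := Pre'.of_le le_rfl

theorem Pre'.add_right (hCu : IsCuSemigroup S) {z x' a b : S} (e : S) (h : Pre' z x' a b) :
    Pre' z x' (a + e) (b + e) := by
  obtain ⟨k, h⟩ := h
  refine ⟨k, ?_⟩
  have := Pre.add_right hCu e h
  have e1 : a + k • x' + e = a + e + k • x' := by
    rw [add_assoc, add_comm (k • x') e, add_assoc]
  have e2 : b + k • z + e = b + e + k • z := by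
    rw [add_assoc, add_comm (k • z) e, add_assoc]
  rwa [e1, e2] at this

theorem Pre'.trans (hCu : IsCuSemigroup S) {z x' a b c : S}
    (h1 : Pre' z x' a b) (h2 : Pre' z x' b c) : Pre' z x' a c := by
  obtain ⟨k1, h1⟩ := h1; obtain ⟨k2, h2⟩ := h2
  refine ⟨k1 + k2, ?_⟩
  have h1' := Pre.add_right hCu (k2 • x') h1
  have h2' := Pre.add_right hCu (k1 • z) h2
  have e1 : a + k1 • x' + k2 • x' = a + (k1 + k2) • x' := by rw [add_nsmul, add_assoc]
  have e2 : b + k1 • z + k2 • x' = b + k2 • x' + k1 • z := by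
    rw [add_assoc, add_comm (k1 • z) (k2 • x'), add_assoc]
  have e3 : c + k2 • z + k1 • z = c + (k1 + k2) • z := by
    rw [add_nsmul, add_comm (k1 • z) (k2 • z), add_assoc]
  rw [e1, e2] at h1'
  rw [e3] at h2'
  exact (h1'.trans hCu h2')

theorem Pre'.cancel (hCu : IsCuSemigroup S) {z x' a b w : S} (hw : w ∈ Bset z)
    (h : Pre' z x' (a + w) (b + w)) : Pre' z x' a b := by
  obtain ⟨k, h⟩ := h
  refine ⟨k, Pre.cancel hCu hw ?_⟩
  have e1 : a + w + k • x' = a + k • x' + w := by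
    rw [add_assoc, add_comm w (k • x'), add_assoc]
  have e2 : b + w + k • z = b + k • z + w := by
    rw [add_assoc, add_comm w (k • z), add_assoc]
  rwa [e1, e2] at h

theorem Pre'.add (hCu : IsCuSemigroup S) {z x' a b c d : S}
    (h1 : Pre' z x' a b) (h2 : Pre' z x' c d) : Pre' z x' (a + c) (b + d) := by
  have h1' := Pre'.add_right hCu c h1
  have h2' := Pre'.add_right hCu b h2
  rw [add_comm c b, add_comm d b] at h2'
  exact h1'.trans hCu h2'

theorem Pre'.nsmul (hCu : IsCuSemigroup S) {z x' a b : S} (h : Pre' z x' a b) (j : ℕ) :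
    Pre' z x' (j • a) (j • b) := by
  obtain ⟨k, h⟩ := h
  refine ⟨j * k, ?_⟩
  have := Pre.nsmul hCu h j
  rwa [smul_add, smul_add, ← mul_nsmul, ← mul_nsmul, Nat.mul_comm k j] at this

theorem Pre'.z_le_x' (z x' : S) : Pre' z x' z x' :=
  ⟨1, Pre.of_le (by rw [one_nsmul, one_nsmul, add_comm])⟩

end Aux3
section Aux4
open scoped Classical
set_option linter.unusedSectionVars false
set_option linter.unusedVariables false

variable {S : Type*} [AddCommMonoid S] [PartialOrder S]

theorem noPre (hCu : IsCuSemigroup S) {z x' : S}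
    (H : ∀ t : ℕ, ¬((t+1) • x' ≤ t • z)) :
    ∀ t : ℕ, ¬ Pre z ((t+1) • x') (t • z) := by
  rintro t ⟨c, ⟨Nc, hc⟩, hle⟩
  set j := Nc + 1 with hj
  have hit := Pre.iterate hCu hle j
  have key : (j * (t+1)) • x' ≤ (j * t + Nc) • z := by
    calc (j * (t+1)) • x' = j • ((t+1) • x') := (smul_smul j (t+1) x').symm
      _ ≤ j • ((t+1) • x') + c := cuLeAddSelf hCu _ _
      _ ≤ j • (t • z) + c := hit
      _ ≤ j • (t • z) + Nc • z := hCu.add_le_add le_rfl hc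
      _ = (j * t) • z + Nc • z := by rw [smul_smul]
      _ = (j * t + Nc) • z := by rw [add_nsmul]
  have hT : j * t + Nc + 1 = j * (t + 1) := by rw [Nat.mul_add, Nat.mul_one, hj, Nat.add_assoc]
  exact H (j * t + Nc) (by rw [hT]; exact key)

theorem base_mono (hCu : IsCuSemigroup S) {z x' : S} (hx'B : x' ∈ Bset z)
    (H : ∀ t : ℕ, ¬((t+1) • x' ≤ t • z)) :
    ∀ s s' : ℕ, Pre' z x' (s • z) (s' • z) → s ≤ s' := by
  intro s s' hss
  by_contra hlt
  push_neg at hlt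
  obtain ⟨d0, hd⟩ := Nat.exists_eq_add_of_lt hlt
  set d := d0 + 1 with hd1
  obtain ⟨k, hPre⟩ := hss
  -- rewrite s•z = s'•z + d•z
  have hsd : s = s' + d := by omega
  have hsz : s • z = s' • z + d • z := by rw [hsd, add_nsmul]
  rw [hsz] at hPre
  have hPre2 : Pre z (s' • z + (d • z + k • x')) (s' • z + k • z) := by
    have e1 : s' • z + d • z + k • x' = s' • z + (d • z + k • x') := by rw [add_assoc]
    rwa [e1] at hPre
  have hrel : Pre z (d • z + k • x') (k • z) := by
    apply Pre.cancel hCu (Bset_nsmul hCu (Bset_z z) s')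
    have e1 : d • z + k • x' + s' • z = s' • z + (d • z + k • x') := add_comm _ _
    have e2 : k • z + s' • z = s' • z + k • z := add_comm _ _
    rw [e1, e2]
    exact hPre2
  obtain ⟨N0, hN0⟩ := hx'B
  rcases Nat.eq_zero_or_pos k with hk0 | hkpos
  · -- k = 0 : d • z ≼ 0
    subst hk0
    obtain ⟨c, ⟨Nc, hc⟩, hle⟩ := hrel
    simp only [zero_smul, add_zero, zero_add] at hle
    -- hle : d • z + c ≤ c
    have hbig : ∀ j : ℕ, (j * d) • z ≤ Nc • z := by
      intro j
      have hit := Pre.iterate hCu (by simpa using hle : d • z + c ≤ 0 + c) j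
      calc (j * d) • z = j • (d • z) := (smul_smul j d z).symm
        _ ≤ j • (d • z) + c := cuLeAddSelf hCu _ _
        _ ≤ j • (0:S) + c := hit
        _ = c := by simp
        _ ≤ Nc • z := hc
    have : (Nc + 1) • x' ≤ Nc • z := by
      calc (Nc + 1) • x' ≤ (Nc + 1) • (N0 • z) := nsmul_le_nsmul_elt hCu hN0 _
        _ = ((Nc + 1) * N0) • z := smul_smul _ _ _
        _ ≤ (((Nc + 1) * N0) * d) • z := nsmul_le_nsmul_coeff hCu (by
            have : 1 ≤ d := by omega
            calc (Nc + 1) * N0 = (Nc + 1) * N0 * 1 := by ring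
              _ ≤ (Nc + 1) * N0 * d := Nat.mul_le_mul_left _ this) z
        _ ≤ Nc • z := hbig _
    exact H Nc this
  · -- k ≥ 1
    set D := min d k with hD
    have hD1 : 1 ≤ D := by omega
    have hDk : D ≤ k := min_le_right d k
    have hrel2 : Pre z (D • z + k • x') (k • z) := by
      refine (Pre.of_le ?_).trans hCu hrel
      exact hCu.add_le_add (nsmul_le_nsmul_coeff hCu (min_le_left d k) z) le_rfl
    set T := 2 * k - D with hT
    have hchain : Pre z ((T + 1) • x') (T • z) := by
      have c1 : (T + 1) • x' ≤ (2 * k) • x' := nsmul_le_nsmul_coeff hCu (by omega) x'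
      have c2 : (2 * k) • x' ≤ D • z + (2 * k) • x' := by
        rw [add_comm]; exact cuLeAddSelf hCu _ _
      have c3 : Pre z (D • z + (2 * k) • x') (k • z + k • x') := by
        have := Pre.add_right hCu (k • x') hrel2
        have e1 : D • z + k • x' + k • x' = D • z + (2 * k) • x' := by
          rw [add_assoc, ← add_nsmul]
          norm_num [two_mul]
        rwa [e1] at this
      have c5 : Pre z ((k - D) • z + (D • z + k • x')) ((k - D) • z + k • z) := by
        have := Pre.add_right hCu ((k - D) • z) hrel2
        have e1 : D • z + k • x' + (k - D) • z = (k - D) • z + (D • z + k • x') := by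
          rw [add_comm]
        have e2 : k • z + (k - D) • z = (k - D) • z + k • z := by rw [add_comm]
        rwa [e1, e2] at this
      have c4 : k • z + k • x' = (k - D) • z + (D • z + k • x') := by
        rw [← add_assoc, ← add_nsmul]
        congr 2
        omega
      have c6 : (k - D) • z + k • z = T • z := by
        rw [← add_nsmul]
        congr 1
        omega
      refine (Pre.of_le (c1.trans c2)).trans hCu ?_
      refine c3.trans hCu ?_
      rw [c4]
      rw [c6] at c5
      exact c5
    exact noPre hCu H T hchain

end Aux4
section Aux5
open scoped Classical
set_option linter.unusedSectionVars false
set_option linter.unusedVariables false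

variable {S : Type*} [AddCommMonoid S] [PartialOrder S]

/-- A partial state on the bounded part of `S`, normalized at `z` and forcing `f z ≤ f x'`. -/
structure PState (z x' : S) : Type _ where
  P : Set S
  f : S → ℝ
  zero_mem : (0:S) ∈ P
  z_mem : z ∈ P
  add_mem : ∀ ⦃a b : S⦄, a ∈ P → b ∈ P → a + b ∈ P
  subB : P ⊆ Bset z
  fz : f z = 1
  fadd : ∀ ⦃a b : S⦄, a ∈ P → b ∈ P → f (a + b) = f a + f b
  fmono : ∀ ⦃a b : S⦄, a ∈ P → b ∈ P → Pre' z x' a b → f a ≤ f b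

namespace PState

variable {z x' : S}

instance : Preorder (PState (z:=z) (x':=x')) where
  le p q := p.P ⊆ q.P ∧ ∀ a ∈ p.P, p.f a = q.f a
  le_refl p := ⟨subset_rfl, fun _ _ => rfl⟩
  le_trans p q r h1 h2 := ⟨h1.1.trans h2.1, fun a ha => (h1.2 a ha).trans (h2.2 a (h1.1 ha))⟩

theorem f0 (p : PState z x') : p.f 0 = 0 := by
  have := p.fadd p.zero_mem p.zero_mem
  simp only [add_zero] at this
  linarith

theorem nsmul_mem (p : PState z x') {a : S} (ha : a ∈ p.P) (k : ℕ) : k • a ∈ p.P := by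
  induction k with
  | zero => simpa using p.zero_mem
  | succ k ih => rw [succ_nsmul]; exact p.add_mem ih ha

theorem f_nsmul (p : PState z x') {a : S} (ha : a ∈ p.P) (k : ℕ) :
    p.f (k • a) = k * p.f a := by
  induction k with
  | zero => simpa using p.f0
  | succ k ih =>
    rw [succ_nsmul, p.fadd (p.nsmul_mem ha k) ha, ih]
    push_cast
    ring

theorem fnonneg (hCu : IsCuSemigroup S) (p : PState z x') {a : S} (ha : a ∈ p.P) :
    0 ≤ p.f a := by
  have := p.fmono p.zero_mem ha (Pre'.of_le (hCu.zero_le a))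
  rwa [p.f0] at this

theorem fmono_le (hCu : IsCuSemigroup S) (p : PState z x') {a b : S}
    (ha : a ∈ p.P) (hb : b ∈ p.P) (h : a ≤ b) : p.f a ≤ p.f b :=
  p.fmono ha hb (Pre'.of_le h)

end PState

/-- Base partial state on multiples of `z`. -/
theorem base_PState (hCu : IsCuSemigroup S) {z x' : S} (hx'B : x' ∈ Bset z)
    (H : ∀ t : ℕ, ¬((t+1) • x' ≤ t • z)) : Nonempty (PState z x') := by
  classical
  set P : Set S := {s | ∃ k : ℕ, s = k • z} with hP
  have uniq : ∀ k k' : ℕ, k • z = k' • z → k = k' := by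
    intro k k' h
    exact le_antisymm (base_mono hCu hx'B H k k' (Pre'.of_le h.le))
      (base_mono hCu hx'B H k' k (Pre'.of_le h.ge))
  set f : S → ℝ := fun s => if h : ∃ k : ℕ, s = k • z then (h.choose : ℝ) else 0 with hf
  have rep : ∀ k : ℕ, f (k • z) = k := by
    intro k
    have h : ∃ k' : ℕ, k • z = k' • z := ⟨k, rfl⟩
    have : h.choose = k := (uniq _ _ h.choose_spec.symm)
    simp only [hf, dif_pos h, this]
  refine ⟨⟨P, f, ⟨0, by simp⟩, ⟨1, (one_nsmul z).symm⟩, ?_, ?_, ?_, ?_, ?_⟩⟩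
  · rintro a b ⟨k1, rfl⟩ ⟨k2, rfl⟩
    exact ⟨k1 + k2, by rw [add_nsmul]⟩
  · rintro a ⟨k, rfl⟩
    exact ⟨k, le_rfl⟩
  · have := rep 1
    rw [one_nsmul] at this
    rw [this]
    norm_num
  · rintro a b ⟨k1, rfl⟩ ⟨k2, rfl⟩
    rw [← add_nsmul, rep, rep, rep]
    push_cast
    ring
  · rintro a b ⟨k1, rfl⟩ ⟨k2, rfl⟩ hab
    rw [rep, rep]
    exact_mod_cast base_mono hCu hx'B H k1 k2 hab

/-- Chains of partial states are bounded above. -/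
theorem PState_chains_bounded (hCu : IsCuSemigroup S) {z x' : S} (p₀ : PState z x')
    (c : Set (PState z x')) (hc : IsChain (· ≤ ·) c) : BddAbove c := by
  classical
  rcases Set.eq_empty_or_nonempty c with rfl | hne
  · exact ⟨p₀, by simp [upperBounds]⟩
  obtain ⟨q₀, hq₀⟩ := hne
  set U : Set S := {s | ∃ p ∈ c, s ∈ p.P} with hU
  set F : S → ℝ := fun s => if h : ∃ p ∈ c, s ∈ p.P then h.choose.f s else 0 with hF
  have key : ∀ p ∈ c, ∀ s ∈ p.P, F s = p.f s := by
    intro p hp s hs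
    have h : ∃ q ∈ c, s ∈ q.P := ⟨p, hp, hs⟩
    simp only [hF, dif_pos h]
    obtain ⟨hqc, hsq⟩ := h.choose_spec
    rcases hc.total hqc hp with hle | hle
    · exact hle.2 s hsq
    · exact (hle.2 s hs).symm
  have hup : ∀ {a b : S}, a ∈ U → b ∈ U → ∃ p ∈ c, a ∈ p.P ∧ b ∈ p.P := by
    rintro a b ⟨p, hp, hap⟩ ⟨q, hq, hbq⟩
    rcases hc.total hp hq with hle | hle
    · exact ⟨q, hq, hle.1 hap, hbq⟩
    · exact ⟨p, hp, hap, hle.1 hbq⟩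
  refine ⟨⟨U, F, ⟨q₀, hq₀, q₀.zero_mem⟩, ⟨q₀, hq₀, q₀.z_mem⟩, ?_, ?_, ?_, ?_, ?_⟩, ?_⟩
  · intro a b ha hb
    obtain ⟨p, hp, hap, hbp⟩ := hup ha hb
    exact ⟨p, hp, p.add_mem hap hbp⟩
  · rintro s ⟨p, hp, hsp⟩
    exact p.subB hsp
  · rw [key q₀ hq₀ z q₀.z_mem]
    exact q₀.fz
  · intro a b ha hb
    obtain ⟨p, hp, hap, hbp⟩ := hup ha hb
    rw [key p hp a hap, key p hp b hbp, key p hp (a+b) (p.add_mem hap hbp)]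
    exact p.fadd hap hbp
  · intro a b ha hb hab
    obtain ⟨p, hp, hap, hbp⟩ := hup ha hb
    rw [key p hp a hap, key p hp b hbp]
    exact p.fmono hap hbp hab
  · intro p hp
    exact ⟨fun s hs => ⟨p, hp, hs⟩, fun a ha => (key p hp a ha).symm⟩

end Aux5
section Aux6
open scoped Classical
set_option linter.unusedSectionVars false
set_option linter.unusedVariables false

variable {S : Type*} [AddCommMonoid S] [PartialOrder S]

theorem PState_extend (hCu : IsCuSemigroup S) {z x' : S}
    (m : PState z x') {w : S} (hwB : w ∈ Bset z) (hw : w ∉ m.P) :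
    ∃ p : PState z x', m ≤ p ∧ w ∈ p.P := by
  classical
  have cross : ∀ a b a' b' : S, ∀ j l : ℕ, a ∈ m.P → b ∈ m.P → a' ∈ m.P → b' ∈ m.P →
      Pre' z x' a (b + j • w) → Pre' z x' (b' + l • w) a' →
      (l:ℝ) * (m.f a - m.f b) ≤ (j:ℝ) * (m.f a' - m.f b') := by
    intro a b a' b' j l ha hb ha' hb' h1 h2
    have h1n : Pre' z x' (l • a) (l • b + (l*j) • w) := by
      have := h1.nsmul hCu l
      rwa [smul_add, smul_smul] at this
    have h2n : Pre' z x' (j • b' + (j*l) • w) (j • a') := by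
      have := h2.nsmul hCu j
      rwa [smul_add, smul_smul] at this
    have h1' : Pre' z x' (l • a + j • b') (l • b + (j • b' + (j*l) • w)) := by
      have := h1n.add_right hCu (j • b')
      have e : l • b + (l*j) • w + j • b' = l • b + (j • b' + (j*l) • w) := by
        rw [Nat.mul_comm l j, add_assoc, add_comm ((j*l) • w) (j • b')]
      rwa [e] at this
    have h2' : Pre' z x' (l • b + (j • b' + (j*l) • w)) (l • b + j • a') := by
      have := h2n.add_right hCu (l • b)
      have e1 : j • b' + (j*l) • w + l • b = l • b + (j • b' + (j*l) • w) := add_comm _ _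
      have e2 : j • a' + l • b = l • b + j • a' := add_comm _ _
      rwa [e1, e2] at this
    have combined := h1'.trans hCu h2'
    have hm := m.fmono (m.add_mem (m.nsmul_mem ha l) (m.nsmul_mem hb' j))
      (m.add_mem (m.nsmul_mem hb l) (m.nsmul_mem ha' j)) combined
    have e3 : m.f (l • a + j • b') = l * m.f a + j * m.f b' := by
      rw [m.fadd (m.nsmul_mem ha l) (m.nsmul_mem hb' j), m.f_nsmul ha l, m.f_nsmul hb' j]
    have e4 : m.f (l • b + j • a') = l * m.f b + j * m.f a' := by
      rw [m.fadd (m.nsmul_mem hb l) (m.nsmul_mem ha' j), m.f_nsmul hb l, m.f_nsmul ha' j]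
    rw [e3, e4] at hm
    linarith
  obtain ⟨Nw, hNw⟩ := hwB
  have memNwz : Nw • z ∈ m.P := m.nsmul_mem m.z_mem Nw
  have fNwz : m.f (Nw • z) = Nw := by rw [m.f_nsmul m.z_mem Nw, m.fz, mul_one]
  have upperRel : Pre' z x' (0 + 1 • w) (Nw • z) := Pre'.of_le (by simpa using hNw)
  set Rel : Set ℝ :=
    {r | ∃ a b : S, ∃ j : ℕ, a ∈ m.P ∧ b ∈ m.P ∧ 1 ≤ j ∧ Pre' z x' a (b + j • w) ∧
      r = (m.f a - m.f b) / j} with hRel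
  have hBdd : BddAbove Rel := by
    refine ⟨Nw, ?_⟩
    rintro r ⟨a, b, j, ha, hb, hj, hrel, rfl⟩
    have hcr := cross a b (Nw • z) 0 j 1 ha hb memNwz m.zero_mem hrel upperRel
    rw [fNwz, m.f0] at hcr
    push_cast at hcr
    have hjpos : (0:ℝ) < j := by exact_mod_cast hj
    rw [div_le_iff₀ hjpos]
    linarith
  have hne : (0:ℝ) ∈ Rel := by
    refine ⟨0, 0, 1, m.zero_mem, m.zero_mem, le_rfl,
      Pre'.of_le (by simpa using hCu.zero_le w), by simp [m.f0]⟩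
  set L : ℝ := sSup Rel with hLdef
  have hL0 : 0 ≤ L := le_csSup hBdd hne
  have LB : ∀ a b : S, ∀ j : ℕ, a ∈ m.P → b ∈ m.P → 1 ≤ j →
      Pre' z x' a (b + j • w) → m.f a - m.f b ≤ j * L := by
    intro a b j ha hb hj hrel
    have : (m.f a - m.f b) / j ≤ L := le_csSup hBdd ⟨a, b, j, ha, hb, hj, hrel, rfl⟩
    have hjpos : (0:ℝ) < j := by exact_mod_cast hj
    rw [div_le_iff₀ hjpos] at this
    linarith
  have UB : ∀ a b : S, ∀ j : ℕ, a ∈ m.P → b ∈ m.P → 1 ≤ j →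
      Pre' z x' (b + j • w) a → (j:ℝ) * L ≤ m.f a - m.f b := by
    intro a b j ha hb hj hrel
    have hjpos : (0:ℝ) < j := by exact_mod_cast hj
    have : L ≤ (m.f a - m.f b) / j := by
      refine csSup_le ⟨0, hne⟩ ?_
      rintro r ⟨a', b', j', ha', hb', hj', hrel', rfl⟩
      have hj'pos : (0:ℝ) < j' := by exact_mod_cast hj'
      have hcr := cross a' b' a b j' j ha' hb' ha hb hrel' hrel
      rw [div_le_div_iff₀ hj'pos hjpos]
      linarith
    rw [le_div_iff₀ hjpos] at this
    linarith
  have mono_aux : ∀ a b : S, ∀ k l : ℕ, a ∈ m.P → b ∈ m.P →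
      Pre' z x' (a + k • w) (b + l • w) → m.f a + k * L ≤ m.f b + l * L := by
    intro a b k l ha hb hab
    rcases le_or_gt k l with hkl | hkl
    · have hcan : Pre' z x' a (b + (l - k) • w) := by
        apply Pre'.cancel hCu (Bset_nsmul hCu ⟨Nw, hNw⟩ k)
        have e : b + (l - k) • w + k • w = b + l • w := by
          rw [add_assoc, ← add_nsmul, Nat.sub_add_cancel hkl]
        rwa [e]
      rcases Nat.eq_zero_or_pos (l - k) with h0 | hpos
      · have hkl' : k = l := by omega
        subst hkl'
        have : m.f a ≤ m.f b := m.fmono ha hb (by simpa [h0] using hcan)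
        linarith
      · have hlb := LB a b (l - k) ha hb hpos hcan
        have hc : ((l - k : ℕ) : ℝ) = (l:ℝ) - k := Nat.cast_sub hkl
        rw [hc] at hlb
        linarith
    · have hcan : Pre' z x' (a + (k - l) • w) b := by
        apply Pre'.cancel hCu (Bset_nsmul hCu ⟨Nw, hNw⟩ l)
        have e : a + (k - l) • w + l • w = a + k • w := by
          rw [add_assoc, ← add_nsmul, Nat.sub_add_cancel hkl.le]
        rwa [e]
      have hub := UB b a (k - l) hb ha (by omega) hcan
      have hc : ((k - l : ℕ) : ℝ) = (k:ℝ) - l := Nat.cast_sub hkl.le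
      rw [hc] at hub
      linarith
  set P' : Set S := {s | ∃ q : S × ℕ, q.1 ∈ m.P ∧ s = q.1 + q.2 • w} with hP'
  set f' : S → ℝ := fun s =>
    if h : ∃ q : S × ℕ, q.1 ∈ m.P ∧ s = q.1 + q.2 • w then
      m.f h.choose.1 + (h.choose.2 : ℝ) * L
    else 0 with hf'
  have repval : ∀ a : S, a ∈ m.P → ∀ k : ℕ, f' (a + k • w) = m.f a + k * L := by
    intro a ha k
    have h : ∃ q : S × ℕ, q.1 ∈ m.P ∧ a + k • w = q.1 + q.2 • w := ⟨(a, k), ha, rfl⟩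
    simp only [hf', dif_pos h]
    obtain ⟨hq1, hq2⟩ := h.choose_spec
    have h1 := mono_aux h.choose.1 a h.choose.2 k hq1 ha (Pre'.of_le hq2.ge)
    have h2 := mono_aux a h.choose.1 k h.choose.2 ha hq1 (Pre'.of_le hq2.le)
    linarith
  refine ⟨⟨P', f', ⟨(0,0), m.zero_mem, by simp⟩, ⟨(z,0), m.z_mem, by simp⟩, ?_, ?_, ?_, ?_, ?_⟩,
    ⟨?_, ?_⟩, ⟨(0,1), m.zero_mem, by simp⟩⟩
  · rintro a b ⟨⟨a1, k1⟩, ha1, rfl⟩ ⟨⟨a2, k2⟩, ha2, rfl⟩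
    refine ⟨(a1 + a2, k1 + k2), m.add_mem ha1 ha2, ?_⟩
    simp only
    rw [add_nsmul]
    ac_rfl
  · rintro s ⟨⟨a1, k1⟩, ha1, rfl⟩
    exact Bset_add hCu (m.subB ha1) (Bset_nsmul hCu ⟨Nw, hNw⟩ k1)
  · have := repval z m.z_mem 0
    simpa [m.fz] using this
  · rintro a b ⟨⟨a1, k1⟩, ha1, rfl⟩ ⟨⟨a2, k2⟩, ha2, rfl⟩
    simp only
    have e : (a1 + k1 • w) + (a2 + k2 • w) = (a1 + a2) + (k1 + k2) • w := by
      rw [add_nsmul]; ac_rfl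
    rw [e, repval _ (m.add_mem ha1 ha2) (k1 + k2), repval _ ha1 k1, repval _ ha2 k2,
      m.fadd ha1 ha2]
    push_cast
    ring
  · rintro a b ⟨⟨a1, k1⟩, ha1, rfl⟩ ⟨⟨a2, k2⟩, ha2, rfl⟩ hab
    simp only
    rw [repval _ ha1 k1, repval _ ha2 k2]
    exact mono_aux a1 a2 k1 k2 ha1 ha2 hab
  · intro a ha
    exact ⟨(a, 0), ha, by simp⟩
  · intro a ha
    have := repval a ha 0
    simp only [Nat.cast_zero, zero_mul, add_zero, zero_smul] at this
    exact this.symm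

end Aux6
section Aux7
open scoped Classical
set_option linter.unusedSectionVars false
set_option linter.unusedVariables false

variable {S : Type*} [AddCommMonoid S] [PartialOrder S]

theorem lam_functional (hCu : IsCuSemigroup S)
    (hfun : ∀ l : S → ℝ≥0∞, IsFunctional l →
      (∀ x : S, l x = 0) ∨ (∀ x : S, l x = if x = 0 then 0 else ⊤))
    {z x' : S} (hz : z ≠ 0) (mx : PState z x')
    (hall : ∀ w ∈ Bset z, w ∈ mx.P) :
    IsFunctional (fun s : S => ⨆ t : {t : S // WayBelow t s}, ENNReal.ofReal (mx.f t.1)) := by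
  have memP : ∀ {t s : S}, WayBelow t s → t ∈ mx.P := fun h =>
    hall _ (wb_mem_Bset hCu hfun hz h)
  have lam_mono : ∀ {a b : S}, a ≤ b →
      (⨆ t : {t : S // WayBelow t a}, ENNReal.ofReal (mx.f t.1)) ≤
      (⨆ t : {t : S // WayBelow t b}, ENNReal.ofReal (mx.f t.1)) := by
    intro a b hab
    exact iSup_le fun t =>
      le_iSup_of_le (⟨t.1, wb_le_right t.2 hab⟩ : {u : S // WayBelow u b}) le_rfl
  constructor
  · intro a b hab
    exact lam_mono hab
  · refine le_antisymm (iSup_le fun t => ?_) zero_le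
    have ht : t.1 = 0 := le_antisymm (wb_le t.2) (hCu.zero_le _)
    rw [ht, mx.f0]
    simp
  · intro x y
    refine le_antisymm ?_ ?_
    · refine iSup_le fun u => ?_
      obtain ⟨a, b, ha, hb, hle⟩ := wb_add_decomp hCu u.2
      have h1 : mx.f u.1 ≤ mx.f a + mx.f b := by
        rw [← mx.fadd (memP ha) (memP hb)]
        exact mx.fmono_le hCu (memP u.2) (mx.add_mem (memP ha) (memP hb)) hle
      calc ENNReal.ofReal (mx.f u.1) ≤ ENNReal.ofReal (mx.f a + mx.f b) :=
            ENNReal.ofReal_le_ofReal h1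
        _ = ENNReal.ofReal (mx.f a) + ENNReal.ofReal (mx.f b) :=
            ENNReal.ofReal_add (mx.fnonneg hCu (memP ha)) (mx.fnonneg hCu (memP hb))
        _ ≤ _ := add_le_add (le_iSup_of_le ⟨a, ha⟩ le_rfl) (le_iSup_of_le ⟨b, hb⟩ le_rfl)
    · haveI h1 : Nonempty {t : S // WayBelow t x} := ⟨⟨0, zero_wb hCu x⟩⟩
      haveI h2 : Nonempty {t : S // WayBelow t y} := ⟨⟨0, zero_wb hCu y⟩⟩
      rw [ENNReal.iSup_add]
      refine iSup_le fun i => ?_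
      rw [ENNReal.add_iSup]
      refine iSup_le fun j => ?_
      have hsum : WayBelow (i.1 + j.1) (x + y) := hCu.O3 i.2 j.2
      have he : ENNReal.ofReal (mx.f i.1) + ENNReal.ofReal (mx.f j.1)
          = ENNReal.ofReal (mx.f (i.1 + j.1)) := by
        rw [mx.fadd (memP i.2) (memP j.2),
          ENNReal.ofReal_add (mx.fnonneg hCu (memP i.2)) (mx.fnonneg hCu (memP j.2))]
      rw [he]
      exact le_iSup_of_le (⟨i.1 + j.1, hsum⟩ : {u : S // WayBelow u (x + y)}) le_rfl
  · intro g s hg hlub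
    refine le_antisymm ?_ (iSup_le fun n => lam_mono (hlub.1 ⟨n, rfl⟩))
    refine iSup_le fun t => ?_
    obtain ⟨c, hc1, hc2⟩ := wb_interp hCu t.2
    obtain ⟨n, hn⟩ := hc2 g s hg hlub le_rfl
    have hwb : WayBelow t.1 (g n) := wb_le_right hc1 hn
    exact le_trans
      (le_iSup_of_le (⟨t.1, hwb⟩ : {u : S // WayBelow u (g n)}) le_rfl)
      (le_iSup (fun n => ⨆ u : {u : S // WayBelow u (g n)}, ENNReal.ofReal (mx.f u.1)) n)

theorem exists_mult (hCu : IsCuSemigroup S)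
    (hfun : ∀ l : S → ℝ≥0∞, IsFunctional l →
      (∀ x : S, l x = 0) ∨ (∀ x : S, l x = if x = 0 then 0 else ⊤))
    {z x' x : S} (hz : z ≠ 0) (hwb : WayBelow x' x) :
    ∃ t : ℕ, (t + 1) • x' ≤ t • z := by
  by_contra H
  push_neg at H
  have hx'B : x' ∈ Bset z := wb_mem_Bset hCu hfun hz hwb
  obtain ⟨p₀⟩ := base_PState hCu hx'B H
  obtain ⟨mx, hmx⟩ := zorn_le (PState_chains_bounded hCu p₀)
  have hall : ∀ w ∈ Bset z, w ∈ mx.P := by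
    intro w hwB
    by_contra hw
    obtain ⟨p, hle, hwp⟩ := PState_extend hCu mx hwB hw
    exact hw ((hmx hle).1 hwp)
  have memP : ∀ {t s : S}, WayBelow t s → t ∈ mx.P := fun h =>
    hall _ (wb_mem_Bset hCu hfun hz h)
  have hlamf := lam_functional hCu hfun hz mx hall
  have hx'P : x' ∈ mx.P := hall x' hx'B
  have hfx' : (1:ℝ) ≤ mx.f x' := by
    have := mx.fmono mx.z_mem hx'P (Pre'.z_le_x' z x')
    rwa [mx.fz] at this
  rcases hfun _ hlamf with h | h
  · have h0 := h x
    have h1 : ENNReal.ofReal (mx.f x') ≤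
        ⨆ t : {t : S // WayBelow t x}, ENNReal.ofReal (mx.f t.1) :=
      le_iSup_of_le (⟨x', hwb⟩ : {t : S // WayBelow t x}) le_rfl
    rw [h0] at h1
    have h2 : ENNReal.ofReal (mx.f x') = 0 := le_antisymm h1 zero_le
    rw [ENNReal.ofReal_eq_zero] at h2
    linarith
  · have hz' := h z
    simp only [if_neg hz] at hz'
    have hb : (⨆ t : {t : S // WayBelow t z}, ENNReal.ofReal (mx.f t.1)) ≤
        ENNReal.ofReal 1 := by
      refine iSup_le fun t => ?_
      have : mx.f t.1 ≤ 1 := by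
        have := mx.fmono_le hCu (memP t.2) mx.z_mem (wb_le t.2)
        rwa [mx.fz] at this
      exact ENNReal.ofReal_le_ofReal this
    rw [hz'] at hb
    exact ENNReal.ofReal_ne_top (top_le_iff.mp hb)

end Aux7


open scoped Classical in
/-- If a Cu-semigroup with (O5) has `m`-comparison, is `n`-almost divisible, and its only
functionals are the zero functional and the `{0,∞}`-valued one, then any two elements
with nonzero target compare. -/
theorem stmt_10 {S : Type*} [AddCommMonoid S] [PartialOrder S]
    (hCu : IsCuSemigroup S) (hO5 : SatisfiesO5 S) (m n : ℕ)
    (hcmp : ∀ (x : S) (y : Fin (m + 1) → S),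
      (∀ j, ∃ k : ℕ, (k + 1) • x ≤ k • y j) → x ≤ ∑ j, y j)
    (hdiv : ∀ x : S, ∀ k : ℕ, ∀ x' : S, WayBelow x' x →
      ∃ z : S, k • z ≤ x ∧ x' ≤ ((k + 1) * (n + 1)) • z)
    (hfun : ∀ l : S → ℝ≥0∞, IsFunctional l →
      (∀ x : S, l x = 0) ∨ (∀ x : S, l x = if x = 0 then 0 else ⊤)) :
    ∀ x y : S, y ≠ 0 → x ≤ y := by
  intro x y hy
  obtain ⟨y'', hy''wb, hy''0⟩ := exists_wb_ne_zero hCu hy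
  obtain ⟨zdiv, hz1, hz2⟩ := hdiv y (m + 1) y'' hy''wb
  have hz0 : zdiv ≠ 0 := by
    rintro rfl
    rw [smul_zero] at hz2
    exact hy''0 (le_antisymm hz2 (hCu.zero_le _))
  have key : ∀ x'' : S, WayBelow x'' x → x'' ≤ y := by
    intro x'' hx''
    obtain ⟨t, ht⟩ := exists_mult hCu hfun hz0 hx''
    have hsum := hcmp x'' (fun _ => zdiv) (fun j => ⟨t, ht⟩)
    calc x'' ≤ ∑ _j : Fin (m+1), zdiv := hsum
      _ = (m+1) • zdiv := by simp [Finset.sum_const, Finset.card_univ]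
      _ ≤ y := hz1
  obtain ⟨g, hgm, hgwb, hglub⟩ := o2' hCu x
  refine hglub.2 ?_
  rintro _ ⟨i, rfl⟩
  exact key (g i) (hgwb i)
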